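/- arXiv:2109.10207 — 4 statements merged into one kernel-verified Lean document; each statement's English description precedes it below -/
import Mathlib

section
/- Let F : [0,T] → ℝ^{n×n} be continuously differentiable and satisfy the matrix differential equation F'(t) = L_A(F(t)) + Π(F(t)) for all t ∈ [0,T], with symmetric initial value F(0) = X₀. If the matrix K is positive semidefinite, then there exist real constants c_low and c_up such that for all t ∈ [0,T], in the Loewner order, exp(At) X₀ exp(Aᵀt) + c_low · ∫₀ᵗ exp(As) Π(I) exp(Aᵀs) ds ≼ F(t) ≼ exp(At) X₀ exp(Aᵀt) + c_up · ∫₀ᵗ exp(As) Π(I) exp(Aᵀs) ds. -/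
set_option maxHeartbeats 1000000

open Matrix MeasureTheory

/-- The matrix exponential over `ℝ`. -/
noncomputable def mexp {ι : Type*} [Fintype ι] [DecidableEq ι] (A : Matrix ι ι ℝ) :
    Matrix ι ι ℝ := NormedSpace.exp A

/-- The Lyapunov operator `L_A(X) = A X + X Aᵀ`. -/
def LyapL {n : ℕ} (A X : Matrix (Fin n) (Fin n) ℝ) : Matrix (Fin n) (Fin n) ℝ :=
  A * X + X * Aᵀ

/-- The operator `Π(X) = Σ_{i,j} k_{ij} N_i X N_jᵀ`. -/
def PiOp {n q : ℕ} (K : Matrix (Fin q) (Fin q) ℝ) (N : Fin q → Matrix (Fin n) (Fin n) ℝ)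
    (X : Matrix (Fin n) (Fin n) ℝ) : Matrix (Fin n) (Fin n) ℝ :=
  ∑ i, ∑ j, K i j • (N i * X * (N j)ᵀ)

/-- Entrywise interval integral of a matrix-valued function. -/
noncomputable def mInt {a b : ℕ} (s t : ℝ) (F : ℝ → Matrix (Fin a) (Fin b) ℝ) :
    Matrix (Fin a) (Fin b) ℝ :=
  Matrix.of fun i j => ∫ u in s..t, F u i j

open scoped MatrixOrder in
lemma exists_eq_transpose_mul_self_aux {n : ℕ} {X : Matrix (Fin n) (Fin n) ℝ}
    (hX : X.PosSemidef) : ∃ B : Matrix (Fin n) (Fin n) ℝ, X = Bᴴ * B := by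
  obtain ⟨B, hB, -, hBB⟩ := CFC.exists_sqrt_of_isSelfAdjoint_of_quasispectrumRestricts
    hX.isHermitian (QuasispectrumRestricts.nnreal_of_nonneg hX.nonneg)
  exact ⟨B, by rw [← hBB]; exact congrArg (· * B) hB.symm⟩

namespace Thm41

open NormedSpace intervalIntegral Set

attribute [local instance] Matrix.linftyOpNormedAddCommGroup Matrix.linftyOpNormedRing
  Matrix.linftyOpNormedAlgebra

variable {n q : ℕ}

/-! ### Entrywise calculus bridges -/

/-- entry evaluation as a continuous linear map -/
noncomputable def entryL (i j : Fin n) : Matrix (Fin n) (Fin n) ℝ →L[ℝ] ℝ :=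
  LinearMap.toContinuousLinearMap
    { toFun := fun M => M i j, map_add' := fun _ _ => rfl, map_smul' := fun _ _ => rfl }

theorem hasDerivAt_entry {f : ℝ → Matrix (Fin n) (Fin n) ℝ} {f' : Matrix (Fin n) (Fin n) ℝ}
    {t : ℝ} (h : HasDerivAt f f' t) (i j : Fin n) :
    HasDerivAt (fun s => f s i j) (f' i j) t :=
  (entryL i j).hasFDerivAt.comp_hasDerivAt t h

theorem hasDerivAt_of_entries {f : ℝ → Matrix (Fin n) (Fin n) ℝ} {f' : Matrix (Fin n) (Fin n) ℝ}
    {t : ℝ} (h : ∀ i j, HasDerivAt (fun s => f s i j) (f' i j) t) : HasDerivAt f f' t := by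
  have H : HasDerivAt (fun s => ∑ i, ∑ j, single i j (f s i j))
      (∑ i : Fin n, ∑ j : Fin n, single i j (f' i j)) t := by
    refine HasDerivAt.fun_sum fun i _ => HasDerivAt.fun_sum fun j _ => ?_
    have := (h i j).smul_const (single i j (1:ℝ))
    simpa [Matrix.smul_single, smul_eq_mul] using this
  have e1 : (fun s => ∑ i, ∑ j, single i j (f s i j)) = f := by
    funext s; exact (matrix_eq_sum_single (f s)).symm
  have e2 : (∑ i : Fin n, ∑ j : Fin n, single i j (f' i j)) = f' :=
    (matrix_eq_sum_single f').symm
  rwa [e1, e2] at H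

theorem hasDerivAt_transpose {f : ℝ → Matrix (Fin n) (Fin n) ℝ} {f' : Matrix (Fin n) (Fin n) ℝ}
    {t : ℝ} (h : HasDerivAt f f' t) : HasDerivAt (fun s => (f s)ᵀ) f'ᵀ t :=
  hasDerivAt_of_entries fun i j => hasDerivAt_entry h j i

/-! ### Lemmas about `PiOp` -/

lemma sum_mulVec {ι : Type*} (s : Finset ι) (M : ι → Matrix (Fin n) (Fin n) ℝ) (x : Fin n → ℝ) :
    (∑ i ∈ s, M i) *ᵥ x = ∑ i ∈ s, (M i) *ᵥ x := by
  ext k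
  simp only [Matrix.mulVec, dotProduct, Finset.sum_apply, Matrix.sum_apply,
    Finset.sum_mul]
  rw [Finset.sum_comm]

variable {K : Matrix (Fin q) (Fin q) ℝ} {N : Fin q → Matrix (Fin n) (Fin n) ℝ}

lemma piOp_add (X Y : Matrix (Fin n) (Fin n) ℝ) :
    PiOp K N (X + Y) = PiOp K N X + PiOp K N Y := by
  simp [PiOp, mul_add, add_mul, smul_add, Finset.sum_add_distrib]

lemma piOp_smul (c : ℝ) (X : Matrix (Fin n) (Fin n) ℝ) :
    PiOp K N (c • X) = c • PiOp K N X := by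
  simp only [PiOp, Matrix.mul_smul, Matrix.smul_mul, Finset.smul_sum]
  congr 1; funext i; congr 1; funext j; rw [smul_comm]

lemma piOp_neg (X : Matrix (Fin n) (Fin n) ℝ) : PiOp K N (-X) = -PiOp K N X := by
  simp [PiOp, mul_neg, neg_mul, smul_neg, Finset.sum_neg_distrib]

lemma piOp_transpose (hK : K.IsSymm) (X : Matrix (Fin n) (Fin n) ℝ) :
    (PiOp K N X)ᵀ = PiOp K N Xᵀ := by
  simp only [PiOp, Matrix.transpose_sum, Matrix.transpose_smul, Matrix.transpose_mul,
    Matrix.transpose_transpose]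
  rw [Finset.sum_comm]
  refine Finset.sum_congr rfl fun i _ => Finset.sum_congr rfl fun j _ => ?_
  rw [hK.apply, mul_assoc]

lemma isSymm_of_posSemidef (h : K.PosSemidef) : K.IsSymm := by
  have := h.1; simpa [Matrix.IsHermitian, Matrix.IsSymm] using this

lemma piOp_posSemidef (hK : K.PosSemidef) {X : Matrix (Fin n) (Fin n) ℝ} (hX : X.PosSemidef) :
    (PiOp K N X).PosSemidef := by
  obtain ⟨B, rfl⟩ := exists_eq_transpose_mul_self_aux hX
  have hBt : Bᴴ = Bᵀ := by simp
  rw [hBt]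
  refine Matrix.PosSemidef.of_dotProduct_mulVec_nonneg ?_ ?_
  · show (PiOp K N (Bᵀ * B))ᴴ = _
    have h1 : (PiOp K N (Bᵀ * B))ᴴ = (PiOp K N (Bᵀ * B))ᵀ := by simp
    rw [h1, piOp_transpose (isSymm_of_posSemidef hK), Matrix.transpose_mul,
      Matrix.transpose_transpose]
  · intro x
    set u : Fin q → Fin n → ℝ := fun i => (B * (N i)ᵀ) *ᵥ x with hu
    have key : ∀ i j, star x ⬝ᵥ ((K i j • (N i * (Bᵀ * B) * (N j)ᵀ)) *ᵥ x)
        = K i j * (u i ⬝ᵥ u j) := by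
      intro i j
      have h2 : N i * (Bᵀ * B) * (N j)ᵀ = (B * (N i)ᵀ)ᵀ * (B * (N j)ᵀ) := by
        rw [Matrix.transpose_mul, Matrix.transpose_transpose]
        noncomm_ring
      rw [h2, star_trivial, Matrix.smul_mulVec, dotProduct_smul, smul_eq_mul,
        ← Matrix.mulVec_mulVec, Matrix.dotProduct_mulVec, Matrix.vecMul_transpose]
    have dot_sum : ∀ {ι : Type} (s : Finset ι) (v : ι → Fin n → ℝ) (y : Fin n → ℝ),
        y ⬝ᵥ (∑ i ∈ s, v i) = ∑ i ∈ s, y ⬝ᵥ v i := by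
      intro ι s v y
      simp only [dotProduct, Finset.sum_apply, Finset.mul_sum]
      exact Finset.sum_comm
    have expand : star x ⬝ᵥ (PiOp K N (Bᵀ * B) *ᵥ x) = ∑ i, ∑ j, K i j * (u i ⬝ᵥ u j) := by
      simp only [PiOp]
      rw [sum_mulVec]
      rw [star_trivial, dot_sum]
      refine Finset.sum_congr rfl fun i _ => ?_
      rw [sum_mulVec, dot_sum]
      refine Finset.sum_congr rfl fun j _ => ?_
      have := key i j
      rwa [star_trivial] at this
    rw [expand]
    have swap : ∑ i, ∑ j, K i j * (u i ⬝ᵥ u j)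
        = ∑ c : Fin n, (fun i => u i c) ⬝ᵥ (K *ᵥ fun i => u i c) := by
      have step1 : ∑ i, ∑ j, K i j * (u i ⬝ᵥ u j)
          = ∑ i, ∑ c : Fin n, ∑ j, u i c * (K i j * u j c) := by
        refine Finset.sum_congr rfl fun i _ => ?_
        rw [Finset.sum_comm]
        refine Finset.sum_congr rfl fun j _ => ?_
        simp only [dotProduct, Finset.mul_sum]
        exact Finset.sum_congr rfl fun c _ => by ring
      rw [step1, Finset.sum_comm]
      refine Finset.sum_congr rfl fun c _ => ?_
      simp only [dotProduct, Matrix.mulVec, Finset.mul_sum]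
    rw [swap]
    refine Finset.sum_nonneg fun c _ => ?_
    simpa using hK.dotProduct_mulVec_nonneg (fun i => u i c)

/-! ### Lemmas about `mexp` and `mInt` -/

lemma mexp_transpose (B : Matrix (Fin n) (Fin n) ℝ) : (mexp B)ᵀ = mexp Bᵀ :=
  (Matrix.exp_transpose B).symm

lemma hasDerivAt_mexp (A : Matrix (Fin n) (Fin n) ℝ) (t : ℝ) :
    HasDerivAt (fun u : ℝ => mexp (u • A)) (A * mexp (t • A)) t :=
  hasDerivAt_exp_smul_const' A t

lemma continuous_mexp (A : Matrix (Fin n) (Fin n) ℝ) :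
    Continuous (fun u : ℝ => mexp (u • A)) :=
  continuous_iff_continuousAt.mpr fun t => (hasDerivAt_mexp A t).continuousAt

lemma mexp_zero_smul (A : Matrix (Fin n) (Fin n) ℝ) : mexp ((0:ℝ) • A) = 1 := by
  rw [zero_smul]; exact NormedSpace.exp_zero

lemma mexp_smul_add (A : Matrix (Fin n) (Fin n) ℝ) (s t : ℝ) :
    mexp (s • A) * mexp (t • A) = mexp ((s + t) • A) := by
  rw [add_smul]
  exact (Matrix.exp_add_of_commute _ _ ((Commute.refl A).smul_left s |>.smul_right t)).symm

lemma mexp_mul_mexp_neg (A : Matrix (Fin n) (Fin n) ℝ) (t : ℝ) :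
    mexp (t • A) * mexp (t • (-A)) = 1 := by
  have h : t • (-A) = (-t) • A := by simp
  rw [h, mexp_smul_add, add_neg_cancel, mexp_zero_smul]

lemma commute_mexp {A B : Matrix (Fin n) (Fin n) ℝ} (h : Commute A B) (t : ℝ) :
    Commute A (mexp (t • B)) :=
  (h.smul_right t).exp_right

@[simp] lemma mInt_apply {a b : ℕ} (s t : ℝ) (F : ℝ → Matrix (Fin a) (Fin b) ℝ) (i j) :
    mInt s t F i j = ∫ u in s..t, F u i j := rfl

lemma mInt_self {f : ℝ → Matrix (Fin n) (Fin n) ℝ} (a : ℝ) : mInt a a f = 0 := by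
  ext i j; simp [mInt]

lemma mInt_isSymm {a b : ℝ} {f : ℝ → Matrix (Fin n) (Fin n) ℝ} (hf : ∀ u, (f u).IsSymm) :
    (mInt a b f).IsSymm := by
  ext i j
  show (mInt a b f) j i = (mInt a b f) i j
  show (∫ u in a..b, f u j i) = ∫ u in a..b, f u i j
  refine intervalIntegral.integral_congr fun u _ => ?_
  exact ((congrFun (congrFun (hf u) j) i).symm : _)

lemma mInt_conj {a b : ℝ} (B C : Matrix (Fin n) (Fin n) ℝ) {f : ℝ → Matrix (Fin n) (Fin n) ℝ}
    (hf : ∀ i j, Continuous (fun u => f u i j)) :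
    B * mInt a b f * C = mInt a b fun u => B * f u * C := by
  ext i j
  have hmul : ∀ (M : Matrix (Fin n) (Fin n) ℝ), (B * M * C) i j
      = ∑ l, ∑ k, B i k * M k l * C l j := by
    intro M
    simp only [Matrix.mul_apply, Finset.sum_mul]
  show (B * mInt a b f * C) i j = ∫ u in a..b, (B * f u * C) i j
  rw [hmul]
  have h0 : (fun u => (B * f u * C) i j) = fun u => ∑ l, ∑ k, B i k * f u k l * C l j := by
    funext u; rw [hmul]
  rw [h0]
  have hc : ∀ l k : Fin n, Continuous fun u => B i k * f u k l * C l j := by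
    intro l k; exact (continuous_const.mul (hf k l)).mul continuous_const
  have e1 : (∫ u in a..b, ∑ l, ∑ k, B i k * f u k l * C l j)
      = ∑ l, ∫ u in a..b, ∑ k, B i k * f u k l * C l j :=
    intervalIntegral.integral_finset_sum (fun l _ =>
      (continuous_finset_sum Finset.univ fun k _ => hc l k).intervalIntegrable a b)
  rw [e1]
  refine Finset.sum_congr rfl fun l _ => ?_
  have e2 : (∫ u in a..b, ∑ k, B i k * f u k l * C l j)
      = ∑ k, ∫ u in a..b, B i k * f u k l * C l j :=
    intervalIntegral.integral_finset_sum (fun k _ => (hc l k).intervalIntegrable a b)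
  rw [e2]
  refine Finset.sum_congr rfl fun k _ => ?_
  rw [mInt_apply, intervalIntegral.integral_mul_const, intervalIntegral.integral_const_mul]

lemma hasDerivAt_mInt {f : ℝ → Matrix (Fin n) (Fin n) ℝ} (hf : Continuous f) (t : ℝ) :
    HasDerivAt (fun s => mInt 0 s f) (f t) t := by
  refine hasDerivAt_of_entries fun i j => ?_
  have hc : Continuous fun u => f u i j := hf.matrix_elem i j
  exact intervalIntegral.integral_hasDerivAt_right (hc.intervalIntegrable 0 t)
    (hc.stronglyMeasurable.stronglyMeasurableAtFilter) hc.continuousAt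

/-! ### Derivative of the conjugated flow -/

lemma hasDerivAt_mul3 {f g h : ℝ → Matrix (Fin n) (Fin n) ℝ}
    {f' g' h' : Matrix (Fin n) (Fin n) ℝ} {t : ℝ}
    (hf : HasDerivAt f f' t) (hg : HasDerivAt g g' t) (hh : HasDerivAt h h' t) :
    HasDerivAt (fun s => f s * g s * h s)
      (f' * g t * h t + f t * g' * h t + f t * g t * h') t := by
  have H := (hf.mul hg).mul hh
  have e : (f' * g t + f t * g') * h t + f t * g t * h'
      = f' * g t * h t + f t * g' * h t + f t * g t * h' := by rw [add_mul]
  rwa [Pi.mul_apply, e] at H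

/-- derivative of `s ↦ exp(s•(-A)) * f s * exp(s•(-A))ᵀ` -/
lemma conj_deriv (A : Matrix (Fin n) (Fin n) ℝ) {f : ℝ → Matrix (Fin n) (Fin n) ℝ}
    {f' : Matrix (Fin n) (Fin n) ℝ} {t : ℝ} (hf : HasDerivAt f f' t) :
    HasDerivAt (fun s => mexp (s • (-A)) * f s * (mexp (s • (-A)))ᵀ)
      (mexp (t • (-A)) * (f' - (A * f t + f t * Aᵀ)) * (mexp (t • (-A)))ᵀ) t := by
  set E := mexp (t • (-A)) with hE
  have hdE : HasDerivAt (fun s : ℝ => mexp (s • (-A))) ((-A) * E) t := hasDerivAt_mexp (-A) t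
  have hdET : HasDerivAt (fun s : ℝ => (mexp (s • (-A)))ᵀ) (((-A) * E)ᵀ) t :=
    hasDerivAt_transpose hdE
  have H := hasDerivAt_mul3 hdE hf hdET
  have hc : A * E = E * A := (commute_mexp ((Commute.refl A).neg_right) t).eq
  have hcT : Aᵀ * Eᵀ = Eᵀ * Aᵀ := by
    rw [← Matrix.transpose_mul, ← Matrix.transpose_mul, hc]
  have hval : (-A) * E * f t * Eᵀ + E * f' * Eᵀ + E * f t * ((-A) * E)ᵀ
      = E * (f' - (A * f t + f t * Aᵀ)) * Eᵀ := by
    have e1 : (-A) * E * f t * Eᵀ = -(E * (A * f t) * Eᵀ) := by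
      rw [neg_mul, hc]
      rw [neg_mul, neg_mul, mul_assoc E A (f t)]
    have e2 : E * f t * ((-A) * E)ᵀ = -(E * (f t * Aᵀ) * Eᵀ) := by
      rw [Matrix.transpose_mul, Matrix.transpose_neg, mul_neg, ← hcT, mul_neg]
      simp only [mul_assoc]
    rw [e1, e2]
    rw [Matrix.mul_sub, Matrix.sub_mul, Matrix.mul_add, Matrix.add_mul]
    abel
  rwa [hval] at H

lemma conj_isSymm (E : Matrix (Fin n) (Fin n) ℝ) {X : Matrix (Fin n) (Fin n) ℝ} (hX : X.IsSymm) :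
    (E * X * Eᵀ).IsSymm := by
  show (E * X * Eᵀ)ᵀ = E * X * Eᵀ
  rw [Matrix.transpose_mul, Matrix.transpose_mul, Matrix.transpose_transpose, hX.eq, mul_assoc]

/-! ### The core monotonicity argument -/

/-- quadratic form evaluation as a continuous linear map -/
noncomputable def quadL (x : Fin n → ℝ) : Matrix (Fin n) (Fin n) ℝ →L[ℝ] ℝ :=
  LinearMap.toContinuousLinearMap
    { toFun := fun M => x ⬝ᵥ (M *ᵥ x),
      map_add' := fun M N' => by
        show x ⬝ᵥ ((M + N') *ᵥ x) = x ⬝ᵥ (M *ᵥ x) + x ⬝ᵥ (N' *ᵥ x)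
        rw [Matrix.add_mulVec, dotProduct_add],
      map_smul' := fun c M => by
        show x ⬝ᵥ ((c • M) *ᵥ x) = c • (x ⬝ᵥ (M *ᵥ x))
        rw [Matrix.smul_mulVec, dotProduct_smul] }

lemma isHermitian_of_isSymm {M : Matrix (Fin n) (Fin n) ℝ} (h : M.IsSymm) : M.IsHermitian := by
  rw [Matrix.IsHermitian, show Mᴴ = Mᵀ by simp]; exact h

/-- Core monotonicity lemma: if `σ 0 = 0`, `σ` is symmetric, and its derivative has nonnegative
quadratic form on `[0,T]`, then `σ t` is PSD on `[0,T]`. -/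
lemma posSemidef_of_deriv {T : ℝ} {σ σ' : ℝ → Matrix (Fin n) (Fin n) ℝ} (hσ0 : σ 0 = 0)
    (hsymm : ∀ t ∈ Icc (0:ℝ) T, (σ t).IsSymm)
    (hd : ∀ t ∈ Icc (0:ℝ) T, HasDerivAt σ (σ' t) t)
    (hq : ∀ t ∈ Icc (0:ℝ) T, ∀ x, 0 ≤ x ⬝ᵥ (σ' t *ᵥ x)) :
    ∀ t ∈ Icc (0:ℝ) T, (σ t).PosSemidef := by
  intro t ht
  refine Matrix.PosSemidef.of_dotProduct_mulVec_nonneg (isHermitian_of_isSymm (hsymm t ht)) fun x => ?_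
  rw [star_trivial]
  set φ : ℝ → ℝ := fun s => x ⬝ᵥ (σ s *ᵥ x) with hφ
  have hφd : ∀ s ∈ Icc (0:ℝ) T, HasDerivAt φ (x ⬝ᵥ (σ' s *ᵥ x)) s := fun s hs =>
    (quadL x).hasFDerivAt.comp_hasDerivAt s (hd s hs)
  have hmono : MonotoneOn φ (Icc (0:ℝ) T) := by
    refine monotoneOn_of_deriv_nonneg (convex_Icc 0 T)
      (fun s hs => ((hφd s hs).continuousAt).continuousWithinAt) ?_ ?_
    · intro s hs
      rw [interior_Icc] at hs
      exact ((hφd s (Ioo_subset_Icc_self hs)).differentiableAt).differentiableWithinAt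
    · intro s hs
      rw [interior_Icc] at hs
      rw [(hφd s (Ioo_subset_Icc_self hs)).deriv]
      exact hq s (Ioo_subset_Icc_self hs) x
  have h0 : φ 0 = 0 := by simp [hφ, hσ0]
  have hT0 : (0:ℝ) ∈ Icc (0:ℝ) T := ⟨le_refl 0, le_trans ht.1 ht.2⟩
  have := hmono hT0 ht ht.1
  rw [h0] at this
  exact this

/-! ### Bound on a continuous symmetric family -/

lemma exists_loewner_bound {T : ℝ} {F : ℝ → Matrix (Fin n) (Fin n) ℝ}
    (hc : ∀ i j, ContinuousOn (fun s => F s i j) (Icc (0:ℝ) T)) :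
    ∃ c : ℝ, ∀ s ∈ Icc (0:ℝ) T, ∀ x : Fin n → ℝ,
      |x ⬝ᵥ (F s *ᵥ x)| ≤ c * (x ⬝ᵥ x) := by
  have hg : ContinuousOn (fun s => ∑ i, ∑ j, |F s i j|) (Icc (0:ℝ) T) := by
    refine continuousOn_finset_sum _ fun i _ => continuousOn_finset_sum _ fun j _ => (hc i j).abs
  obtain ⟨c, hcb⟩ := (isCompact_Icc (a := (0:ℝ)) (b := T)).exists_bound_of_continuousOn hg
  refine ⟨c, fun s hs x => ?_⟩
  have hxx : ∀ i j : Fin n, |x i| * |x j| ≤ x ⬝ᵥ x := by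
    intro i j
    have hsq : ∀ k : Fin n, x k ^ 2 ≤ x ⬝ᵥ x := by
      intro k
      have e : x ⬝ᵥ x = ∑ l, x l ^ 2 := by
        simp [dotProduct, sq]
      rw [e]
      exact Finset.single_le_sum (fun l _ => sq_nonneg (x l)) (Finset.mem_univ k)
    nlinarith [hsq i, hsq j, sq_nonneg (|x i| - |x j|), abs_nonneg (x i), abs_nonneg (x j),
      sq_abs (x i), sq_abs (x j)]
  have expand : x ⬝ᵥ (F s *ᵥ x) = ∑ i, ∑ j, x i * F s i j * x j := by
    simp only [dotProduct, Matrix.mulVec, Finset.mul_sum]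
    refine Finset.sum_congr rfl fun i _ => Finset.sum_congr rfl fun j _ => by ring
  rw [expand]
  calc |∑ i, ∑ j, x i * F s i j * x j| ≤ ∑ i, ∑ j, |x i * F s i j * x j| := by
        refine (Finset.abs_sum_le_sum_abs _ _).trans ?_
        exact Finset.sum_le_sum fun i _ => Finset.abs_sum_le_sum_abs _ _
    _ ≤ ∑ i, ∑ j, |F s i j| * (x ⬝ᵥ x) := by
        refine Finset.sum_le_sum fun i _ => Finset.sum_le_sum fun j _ => ?_
        rw [abs_mul, abs_mul, mul_comm (|x i|) (|F s i j|), mul_assoc]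
        exact mul_le_mul_of_nonneg_left (hxx i j) (abs_nonneg _)
    _ = (∑ i, ∑ j, |F s i j|) * (x ⬝ᵥ x) := by
        rw [Finset.sum_mul]
        exact Finset.sum_congr rfl fun i _ => (Finset.sum_mul _ _ _).symm
    _ ≤ c * (x ⬝ᵥ x) := by
        have h1 : (∑ i, ∑ j, |F s i j|) ≤ c := by
          have h2 := hcb s hs
          rw [Real.norm_eq_abs] at h2
          exact (abs_le.mp h2).2
        have h3 : (0:ℝ) ≤ x ⬝ᵥ x := by
          have e : x ⬝ᵥ x = ∑ l, x l ^ 2 := by simp [dotProduct, sq]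
          rw [e]; exact Finset.sum_nonneg fun l _ => sq_nonneg _
        exact mul_le_mul_of_nonneg_right h1 h3

/-! ### Symmetry of the solution (uniqueness) -/

lemma lyapL_transpose (A X : Matrix (Fin n) (Fin n) ℝ) : (LyapL A X)ᵀ = LyapL A Xᵀ := by
  simp only [LyapL, Matrix.transpose_add, Matrix.transpose_mul, Matrix.transpose_transpose]
  abel

/-- the vector field as a continuous linear map -/
noncomputable def vecFieldL (A : Matrix (Fin n) (Fin n) ℝ) (K : Matrix (Fin q) (Fin q) ℝ)
    (N : Fin q → Matrix (Fin n) (Fin n) ℝ) :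
    Matrix (Fin n) (Fin n) ℝ →L[ℝ] Matrix (Fin n) (Fin n) ℝ :=
  LinearMap.toContinuousLinearMap
    { toFun := fun X => LyapL A X + PiOp K N X,
      map_add' := fun X Y => by
        show LyapL A (X + Y) + PiOp K N (X + Y) = _
        simp only [LyapL, piOp_add, mul_add, add_mul]
        abel,
      map_smul' := fun c X => by
        show LyapL A (c • X) + PiOp K N (c • X) = c • (LyapL A X + PiOp K N X)
        simp only [LyapL, piOp_smul, Matrix.mul_smul, Matrix.smul_mul, smul_add] }

lemma isSymm_sol {T : ℝ} {A : Matrix (Fin n) (Fin n) ℝ} (hK : K.IsSymm)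
    {X₀ : Matrix (Fin n) (Fin n) ℝ} (hX₀ : X₀.IsSymm)
    {F : ℝ → Matrix (Fin n) (Fin n) ℝ} (hF0 : F 0 = X₀)
    (hd : ∀ t ∈ Icc (0:ℝ) T, HasDerivAt F (LyapL A (F t) + PiOp K N (F t)) t) :
    ∀ t ∈ Icc (0:ℝ) T, (F t).IsSymm := by
  set L := vecFieldL A K N with hL
  obtain ⟨C, hC⟩ : ∃ C, LipschitzWith C (fun X => L X) := ⟨_, ContinuousLinearMap.lipschitz (f := L)⟩
  have hv : ∀ t : ℝ, LipschitzWith C (fun X => L X) := fun _ => hC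
  have hFc : ContinuousOn F (Icc 0 T) := fun s hs => ((hd s hs).continuousAt).continuousWithinAt
  have hGd : ∀ t ∈ Icc (0:ℝ) T,
      HasDerivAt (fun s => (F s)ᵀ) (LyapL A ((F t)ᵀ) + PiOp K N ((F t)ᵀ)) t := by
    intro t ht
    have h1 := hasDerivAt_transpose (hd t ht)
    have h2 : (LyapL A (F t) + PiOp K N (F t))ᵀ = LyapL A ((F t)ᵀ) + PiOp K N ((F t)ᵀ) := by
      rw [Matrix.transpose_add, piOp_transpose hK, lyapL_transpose]
    rwa [h2] at h1
  have hGc : ContinuousOn (fun s => (F s)ᵀ) (Icc 0 T) := fun s hs =>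
    ((hGd s hs).continuousAt).continuousWithinAt
  have huniq := ODE_solution_unique (v := fun _ X => L X) hv hGc
    (fun t ht => (hGd t (Ico_subset_Icc_self ht)).hasDerivWithinAt)
    hFc
    (fun t ht => (hd t (Ico_subset_Icc_self ht)).hasDerivWithinAt)
    (by rw [hF0]; exact hX₀)
  intro t ht
  exact huniq ht

/-! ### The one-sided (lower) bound -/

theorem lower_bound {T : ℝ} (A : Matrix (Fin n) (Fin n) ℝ)
    (N : Fin q → Matrix (Fin n) (Fin n) ℝ) (K : Matrix (Fin q) (Fin q) ℝ) (hK : K.PosSemidef)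
    (X₀ : Matrix (Fin n) (Fin n) ℝ) (hX₀ : X₀.IsSymm)
    (F : ℝ → Matrix (Fin n) (Fin n) ℝ) (hF0 : F 0 = X₀)
    (hF : ∀ t ∈ Icc (0:ℝ) T, HasDerivAt F (LyapL A (F t) + PiOp K N (F t)) t) :
    ∃ c : ℝ, ∀ t ∈ Icc (0:ℝ) T,
      (F t - (mexp (t • A) * X₀ * mexp (t • Aᵀ) +
        (-c) • mInt 0 t (fun s => mexp (s • A) * PiOp K N 1 * mexp (s • Aᵀ)))).PosSemidef := by
  have hKs : K.IsSymm := isSymm_of_posSemidef hK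
  have hFsymm : ∀ t ∈ Icc (0:ℝ) T, (F t).IsSymm := isSymm_sol hKs hX₀ hF0 hF
  have hFcent : ∀ i j, ContinuousOn (fun s => F s i j) (Icc (0:ℝ) T) := fun i j s hs =>
    ((hasDerivAt_entry (hF s hs) i j).continuousAt).continuousWithinAt
  obtain ⟨c, hc⟩ := exists_loewner_bound hFcent
  have hPsymm : (PiOp K N 1 : Matrix (Fin n) (Fin n) ℝ).IsSymm := by
    show (PiOp K N 1)ᵀ = PiOp K N 1
    rw [piOp_transpose hKs, Matrix.transpose_one]
  have hEmc : Continuous (fun s : ℝ => mexp (s • (-A))) := continuous_mexp (-A)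
  have hhc : Continuous (fun u : ℝ => mexp (u • (-A)) * PiOp K N 1 * (mexp (u • (-A)))ᵀ) :=
    (hEmc.matrix_mul continuous_const).matrix_mul hEmc.matrix_transpose
  -- the conjugated defect function
  set σ : ℝ → Matrix (Fin n) (Fin n) ℝ := fun s =>
    mexp (s • (-A)) * F s * (mexp (s • (-A)))ᵀ - X₀
      + c • mInt 0 s (fun u => mexp (u • (-A)) * PiOp K N 1 * (mexp (u • (-A)))ᵀ) with hσ
  have hσd : ∀ s ∈ Icc (0:ℝ) T, HasDerivAt σ
      (mexp (s • (-A)) * PiOp K N (F s + c • 1) * (mexp (s • (-A)))ᵀ) s := by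
    intro s hs
    have h1 := conj_deriv A (hF s hs)
    have h2 : LyapL A (F s) + PiOp K N (F s) - (A * F s + F s * Aᵀ) = PiOp K N (F s) := by
      rw [LyapL]; abel
    rw [h2] at h1
    have h3 := (h1.sub_const X₀).add ((hasDerivAt_mInt hhc s).const_smul c)
    have h4 : mexp (s • (-A)) * PiOp K N (F s) * (mexp (s • (-A)))ᵀ
          + c • (mexp (s • (-A)) * PiOp K N 1 * (mexp (s • (-A)))ᵀ)
        = mexp (s • (-A)) * PiOp K N (F s + c • 1) * (mexp (s • (-A)))ᵀ := by
      rw [piOp_add, piOp_smul, Matrix.mul_add, Matrix.add_mul]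
      congr 1
      rw [Matrix.mul_smul, Matrix.smul_mul]
    rwa [h4] at h3
  have hσ0 : σ 0 = 0 := by
    rw [hσ]
    simp only
    rw [mexp_zero_smul, hF0, mInt_self]
    simp [hX₀.eq]
  have hσsymm : ∀ s ∈ Icc (0:ℝ) T, (σ s).IsSymm := by
    intro s hs
    refine Matrix.IsSymm.add (Matrix.IsSymm.sub ?_ hX₀) (Matrix.IsSymm.smul ?_ c)
    · exact conj_isSymm _ (hFsymm s hs)
    · exact mInt_isSymm fun u => conj_isSymm _ hPsymm
  have hσq : ∀ s ∈ Icc (0:ℝ) T, ∀ x : Fin n → ℝ,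
      0 ≤ x ⬝ᵥ ((mexp (s • (-A)) * PiOp K N (F s + c • 1) * (mexp (s • (-A)))ᵀ) *ᵥ x) := by
    intro s hs x
    have hFsum : (F s + c • (1 : Matrix (Fin n) (Fin n) ℝ)).PosSemidef := by
      refine Matrix.PosSemidef.of_dotProduct_mulVec_nonneg ?_ ?_
      · refine isHermitian_of_isSymm (Matrix.IsSymm.add (hFsymm s hs)
          (Matrix.IsSymm.smul Matrix.isSymm_one c))
      · intro x'
        rw [star_trivial, Matrix.add_mulVec, dotProduct_add, Matrix.smul_mulVec,
          Matrix.one_mulVec, dotProduct_smul, smul_eq_mul]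
        have hb := (abs_le.mp (hc s hs x')).1
        linarith
    have hpsd : (PiOp K N (F s + c • 1)).PosSemidef := piOp_posSemidef hK hFsum
    have hcon := (hpsd.mul_mul_conjTranspose_same (mexp (s • (-A)))).dotProduct_mulVec_nonneg x
    rw [star_trivial] at hcon
    have he : (mexp (s • (-A)))ᴴ = (mexp (s • (-A)))ᵀ := by simp
    rwa [he] at hcon
  have hσpsd := posSemidef_of_deriv hσ0 hσsymm hσd hσq
  refine ⟨c, fun t ht => ?_⟩
  have hrT : ∀ s : ℝ, mexp (s • Aᵀ) = (mexp (s • A))ᵀ := fun s => by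
    rw [mexp_transpose, Matrix.transpose_smul]
  have hpm : mexp (t • A) * mexp (t • (-A)) = 1 := mexp_mul_mexp_neg A t
  have unconj : ∀ X : Matrix (Fin n) (Fin n) ℝ,
      mexp (t • A) * (mexp (t • (-A)) * X * (mexp (t • (-A)))ᵀ) * (mexp (t • A))ᵀ = X := by
    intro X
    rw [show mexp (t • (-A)) * X * (mexp (t • (-A)))ᵀ
        = mexp (t • (-A)) * (X * (mexp (t • (-A)))ᵀ) from mul_assoc _ _ _]
    rw [← mul_assoc (mexp (t • A)) (mexp (t • (-A))) _, hpm, one_mul]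
    rw [mul_assoc, ← Matrix.transpose_mul, hpm, Matrix.transpose_one, mul_one]
  -- change of variables in the integral
  have hconj_int : mexp (t • A) * mInt 0 t (fun u => mexp (u • (-A)) * PiOp K N 1
        * (mexp (u • (-A)))ᵀ) * (mexp (t • A))ᵀ
      = mInt 0 t (fun s => mexp (s • A) * PiOp K N 1 * (mexp (s • A))ᵀ) := by
    rw [mInt_conj _ _ (fun i j => hhc.matrix_elem i j)]
    have hfun : ∀ u : ℝ, mexp (t • A) * (mexp (u • (-A)) * PiOp K N 1 * (mexp (u • (-A)))ᵀ)
          * (mexp (t • A))ᵀ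
        = mexp ((t - u) • A) * PiOp K N 1 * (mexp ((t - u) • A))ᵀ := by
      intro u
      have hm : mexp (t • A) * mexp (u • (-A)) = mexp ((t - u) • A) := by
        have hu : u • (-A) = (-u) • A := by simp
        rw [hu, mexp_smul_add, sub_eq_add_neg]
      calc mexp (t • A) * (mexp (u • (-A)) * PiOp K N 1 * (mexp (u • (-A)))ᵀ)
            * (mexp (t • A))ᵀ
          = (mexp (t • A) * mexp (u • (-A))) * PiOp K N 1
            * ((mexp (t • A) * mexp (u • (-A)))ᵀ) := by
            rw [Matrix.transpose_mul]
            simp only [mul_assoc]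
        _ = mexp ((t - u) • A) * PiOp K N 1 * (mexp ((t - u) • A))ᵀ := by rw [hm]
    have e1 : (fun u => mexp (t • A) * (mexp (u • (-A)) * PiOp K N 1 * (mexp (u • (-A)))ᵀ)
          * (mexp (t • A))ᵀ)
        = fun u => mexp ((t - u) • A) * PiOp K N 1 * (mexp ((t - u) • A))ᵀ := funext hfun
    rw [e1]
    ext i j
    rw [mInt_apply, mInt_apply]
    have := intervalIntegral.integral_comp_sub_left
      (a := (0:ℝ)) (b := t)
      (fun w => (mexp (w • A) * PiOp K N 1 * (mexp (w • A))ᵀ) i j) t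
    simpa using this
  have keyid : F t - (mexp (t • A) * X₀ * mexp (t • Aᵀ) +
        (-c) • mInt 0 t (fun s => mexp (s • A) * PiOp K N 1 * mexp (s • Aᵀ)))
      = mexp (t • A) * σ t * (mexp (t • A))ᵀ := by
    simp only [hrT]
    rw [hσ]
    simp only
    rw [Matrix.mul_add, Matrix.mul_sub, Matrix.add_mul, Matrix.sub_mul]
    rw [Matrix.mul_smul, Matrix.smul_mul]
    rw [unconj (F t), hconj_int]
    rw [neg_smul]
    abel
  rw [keyid]
  have hfinal := (hσpsd t ht).mul_mul_conjTranspose_same (mexp (t • A))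
  have he : (mexp (t • A))ᴴ = (mexp (t • A))ᵀ := by simp
  rwa [he] at hfinal

end Thm41

section MainTheorem

open Thm41 Set

attribute [local instance] Matrix.linftyOpNormedAddCommGroup Matrix.linftyOpNormedRing
  Matrix.linftyOpNormedAlgebra

set_option maxHeartbeats 1000000 in
/-- **Theorem 4.1.** -/
theorem thm_4_1 {n q : ℕ} (T : ℝ) (hT : 0 < T)
    (A : Matrix (Fin n) (Fin n) ℝ) (N : Fin q → Matrix (Fin n) (Fin n) ℝ)
    (K : Matrix (Fin q) (Fin q) ℝ) (hK : K.PosSemidef)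
    (X₀ : Matrix (Fin n) (Fin n) ℝ) (hX₀ : X₀.IsSymm)
    (F : ℝ → Matrix (Fin n) (Fin n) ℝ) (hF0 : F 0 = X₀)
    (hF : ∀ t ∈ Set.Icc (0:ℝ) T, ∀ i j,
      HasDerivAt (fun s => F s i j) ((LyapL A (F t) + PiOp K N (F t)) i j) t) :
    ∃ cLow cUp : ℝ, ∀ t ∈ Set.Icc (0:ℝ) T,
      (F t - (mexp (t • A) * X₀ * mexp (t • Aᵀ) +
        cLow • mInt 0 t (fun s => mexp (s • A) * PiOp K N 1 * mexp (s • Aᵀ)))).PosSemidef ∧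
      ((mexp (t • A) * X₀ * mexp (t • Aᵀ) +
        cUp • mInt 0 t (fun s => mexp (s • A) * PiOp K N 1 * mexp (s • Aᵀ))) - F t).PosSemidef := by
  have hFd : ∀ t ∈ Icc (0:ℝ) T, HasDerivAt F (LyapL A (F t) + PiOp K N (F t)) t :=
    fun t ht => hasDerivAt_of_entries (hF t ht)
  obtain ⟨c₁, hc₁⟩ := lower_bound A N K hK X₀ hX₀ F hF0 hFd
  have hFnegd : ∀ t ∈ Icc (0:ℝ) T,
      HasDerivAt (fun s => -(F s)) (LyapL A (-(F t)) + PiOp K N (-(F t))) t := by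
    intro t ht
    have h1 := (hFd t ht).neg
    have h2 : -(LyapL A (F t) + PiOp K N (F t)) = LyapL A (-(F t)) + PiOp K N (-(F t)) := by
      rw [piOp_neg]
      have : LyapL A (-(F t)) = -(LyapL A (F t)) := by
        simp only [LyapL, Matrix.mul_neg, Matrix.neg_mul]
        abel
      rw [this]
      abel
    rwa [h2] at h1
  obtain ⟨c₂, hc₂⟩ := lower_bound A N K hK (-X₀) hX₀.neg (fun s => -(F s))
    (by simp [hF0]) hFnegd
  refine ⟨-c₁, c₂, fun t ht => ⟨hc₁ t ht, ?_⟩⟩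
  have h3 := hc₂ t ht
  have h4 : -(F t) - (mexp (t • A) * (-X₀) * mexp (t • Aᵀ) +
        (-c₂) • mInt 0 t (fun s => mexp (s • A) * PiOp K N 1 * mexp (s • Aᵀ)))
      = (mexp (t • A) * X₀ * mexp (t • Aᵀ) +
        c₂ • mInt 0 t (fun s => mexp (s • A) * PiOp K N 1 * mexp (s • Aᵀ))) - F t := by
    rw [Matrix.mul_neg, Matrix.neg_mul, neg_smul]
    abel
  rwa [h4] at h3

end MainTheorem
end

section
/- Suppose the matrix K = (k_{ij}) ∈ ℝ^{q×q} is symmetric positive semidefinite. Let X ∈ ℝ^{n×n} be symmetric and let λ, μ ∈ ℝ satisfy λ·I ≼ X ≼ μ·I in the Loewner order. Then λ·Π(I) ≼ Π(X) ≼ μ·Π(I), where Π(X) = Σ_{i,j=1}^q k_{ij} N_i X N_jᵀ for given matrices N₁, …, N_q ∈ ℝ^{n×n}. Equivalently, for every vector v ∈ ℝⁿ, λ·vᵀΠ(I)v ≤ vᵀΠ(X)v ≤ μ·vᵀΠ(I)v. -/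
open Matrix

lemma PosSemidef.add' {m : ℕ} {A B : Matrix (Fin m) (Fin m) ℝ}
    (hA : A.PosSemidef) (hB : B.PosSemidef) : (A + B).PosSemidef :=
  ⟨hA.1.add hB.1, fun x => by
    simpa [mul_add, add_mul] using add_nonneg (hA.2 x) (hB.2 x)⟩

lemma PiOp_posSemidef {n q : ℕ} (K : Matrix (Fin q) (Fin q) ℝ)
    (N : Fin q → Matrix (Fin n) (Fin n) ℝ) (hK : K.PosSemidef)
    (Y : Matrix (Fin n) (Fin n) ℝ) (hY : Y.PosSemidef) :
    (PiOp K N Y).PosSemidef := by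
  obtain ⟨B, rfl⟩ : ∃ B : Matrix (Fin q) (Fin q) ℝ, K = Bᴴ * B := by
    open MatrixOrder in exact CStarAlgebra.nonneg_iff_eq_star_mul_self.mp hK.nonneg
  have h1 : ∀ l, (∑ i, B l i • N i) * Y * (∑ j, B l j • N j)ᵀ
      = ∑ i, ∑ j, (B l i * B l j) • (N i * Y * (N j)ᵀ) := by
    intro l
    rw [Matrix.transpose_sum, Finset.sum_mul, Finset.sum_mul]
    refine Finset.sum_congr rfl fun i _ => ?_
    rw [Matrix.mul_sum]
    refine Finset.sum_congr rfl fun j _ => ?_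
    simp [Matrix.mul_smul, Matrix.smul_mul, smul_smul, mul_comm]
  have key : PiOp (Bᴴ * B) N Y = ∑ l, (∑ i, B l i • N i) * Y * (∑ j, B l j • N j)ᵀ := by
    calc PiOp (Bᴴ * B) N Y
        = ∑ i, ∑ j, ∑ l, (B l i * B l j) • (N i * Y * (N j)ᵀ) := by
          unfold PiOp
          refine Finset.sum_congr rfl fun i _ => Finset.sum_congr rfl fun j _ => ?_
          rw [show (Bᴴ * B) i j = ∑ l, B l i * B l j from by simp [Matrix.mul_apply],
            Finset.sum_smul]
      _ = ∑ i, ∑ l, ∑ j, (B l i * B l j) • (N i * Y * (N j)ᵀ) :=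
          Finset.sum_congr rfl fun i _ => Finset.sum_comm
      _ = ∑ l, ∑ i, ∑ j, (B l i * B l j) • (N i * Y * (N j)ᵀ) := Finset.sum_comm
      _ = ∑ l, (∑ i, B l i • N i) * Y * (∑ j, B l j • N j)ᵀ :=
          Finset.sum_congr rfl fun l _ => (h1 l).symm
  rw [key]
  refine Finset.sum_induction _ _ (fun a b ha hb => PosSemidef.add' ha hb)
    Matrix.PosSemidef.zero ?_
  intro l _
  simpa using hY.mul_mul_conjTranspose_same (∑ i, B l i • N i)

lemma PiOp_sub {n q : ℕ} (K : Matrix (Fin q) (Fin q) ℝ)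
    (N : Fin q → Matrix (Fin n) (Fin n) ℝ) (X Y : Matrix (Fin n) (Fin n) ℝ) :
    PiOp K N (X - Y) = PiOp K N X - PiOp K N Y := by
  unfold PiOp
  rw [← Finset.sum_sub_distrib]
  refine Finset.sum_congr rfl fun i _ => ?_
  rw [← Finset.sum_sub_distrib]
  refine Finset.sum_congr rfl fun j _ => ?_
  rw [← smul_sub]
  congr 1
  noncomm_ring

lemma PiOp_smul {n q : ℕ} (K : Matrix (Fin q) (Fin q) ℝ)
    (N : Fin q → Matrix (Fin n) (Fin n) ℝ) (c : ℝ) (X : Matrix (Fin n) (Fin n) ℝ) :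
    PiOp K N (c • X) = c • PiOp K N X := by
  unfold PiOp
  rw [Finset.smul_sum]
  refine Finset.sum_congr rfl fun i _ => ?_
  rw [Finset.smul_sum]
  refine Finset.sum_congr rfl fun j _ => ?_
  simp [Matrix.mul_smul, Matrix.smul_mul, smul_smul, mul_comm]

/-- If `K` is symmetric positive semidefinite, `X` is symmetric and
`λ·I ≼ X ≼ μ·I` in the Loewner order, then `λ·Π(I) ≼ Π(X) ≼ μ·Π(I)`;
equivalently `λ·vᵀΠ(I)v ≤ vᵀΠ(X)v ≤ μ·vᵀΠ(I)v` for every vector `v`. -/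
theorem PiOp_loewner_monotone {n q : ℕ}
    (N : Fin q → Matrix (Fin n) (Fin n) ℝ)
    (K : Matrix (Fin q) (Fin q) ℝ) (hK : K.PosSemidef)
    (X : Matrix (Fin n) (Fin n) ℝ) (hX : X.IsSymm) (lam mu : ℝ)
    (hlow : (X - lam • (1 : Matrix (Fin n) (Fin n) ℝ)).PosSemidef)
    (hup : (mu • (1 : Matrix (Fin n) (Fin n) ℝ) - X).PosSemidef) :
    ((PiOp K N X - lam • PiOp K N 1).PosSemidef ∧
      (mu • PiOp K N 1 - PiOp K N X).PosSemidef) ∧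
    ∀ v : Fin n → ℝ,
      lam * (v ⬝ᵥ (PiOp K N 1).mulVec v) ≤ v ⬝ᵥ (PiOp K N X).mulVec v ∧
      v ⬝ᵥ (PiOp K N X).mulVec v ≤ mu * (v ⬝ᵥ (PiOp K N 1).mulVec v) := by
  have h1 : (PiOp K N X - lam • PiOp K N 1).PosSemidef := by
    have := PiOp_posSemidef K N hK _ hlow
    rwa [PiOp_sub, PiOp_smul] at this
  have h2 : (mu • PiOp K N 1 - PiOp K N X).PosSemidef := by
    have := PiOp_posSemidef K N hK _ hup
    rwa [PiOp_sub, PiOp_smul] at this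
  refine ⟨⟨h1, h2⟩, fun v => ?_⟩
  have e1 := h1.dotProduct_mulVec_nonneg v
  have e2 := h2.dotProduct_mulVec_nonneg v
  simp only [Matrix.sub_mulVec, Matrix.smul_mulVec, dotProduct_sub,
    dotProduct_smul, smul_eq_mul, RCLike.re_to_real, star_trivial] at e1 e2
  constructor <;> linarith
end

section
/- Let P, Q ∈ ℝ^{n×n} be symmetric positive definite with factorizations P = K Kᵀ and Q = L Lᵀ where K, L ∈ ℝ^{n×n} are invertible, and let Kᵀ L = V Σ Uᵀ be a singular value decomposition (V, U orthogonal, Σ diagonal with positive diagonal entries). Define S = Σ^{−1/2} Uᵀ Lᵀ and T' = K V Σ^{−1/2}. Then S T' = I (so S is invertible with S⁻¹ = T'), and the transformation balances the two matrices: S P Sᵀ = Σ and (S⁻¹)ᵀ Q S⁻¹ = Σ. -/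
open Matrix

/-- **Balancing transformation (equation (2.12)).** Let `P = K Kᵀ` and `Q = L Lᵀ` be
symmetric positive definite with `K, L` invertible, and let `Kᵀ L = V Σ Uᵀ` be an SVD
with `V, U` orthogonal and `Σ = diagonal σ`, `σ i > 0`. Then `S = Σ^{−1/2} Uᵀ Lᵀ` and
`T' = K V Σ^{−1/2}` satisfy `S T' = I` and `T' S = I` (so `S⁻¹ = T'`), and `S` balances
the Gramians: `S P Sᵀ = Σ` and `(S⁻¹)ᵀ Q S⁻¹ = T'ᵀ Q T' = Σ`. -/
theorem balancing_transformation {n : ℕ}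
    (P Q K L V U : Matrix (Fin n) (Fin n) ℝ) (σ : Fin n → ℝ)
    (hP : P.PosDef) (hQ : Q.PosDef)
    (hPK : P = K * Kᵀ) (hQL : Q = L * Lᵀ)
    (hKinv : IsUnit K.det) (hLinv : IsUnit L.det)
    (hV : Vᵀ * V = 1) (hV' : V * Vᵀ = 1)
    (hU : Uᵀ * U = 1) (hU' : U * Uᵀ = 1)
    (hσ : ∀ i, 0 < σ i)
    (hSVD : Kᵀ * L = V * Matrix.diagonal σ * Uᵀ) :
    let Sighalfinv : Matrix (Fin n) (Fin n) ℝ := Matrix.diagonal fun i => (Real.sqrt (σ i))⁻¹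
    let S : Matrix (Fin n) (Fin n) ℝ := Sighalfinv * Uᵀ * Lᵀ
    let T' : Matrix (Fin n) (Fin n) ℝ := K * V * Sighalfinv
    S * T' = 1 ∧ T' * S = 1 ∧
    S * P * Sᵀ = Matrix.diagonal σ ∧ T'ᵀ * Q * T' = Matrix.diagonal σ := by
  intro Sighalfinv S T'
  have hLK : Lᵀ * K = U * Matrix.diagonal σ * Vᵀ := by
    have h := congrArg Matrix.transpose hSVD
    simpa [Matrix.transpose_mul, Matrix.mul_assoc] using h
  have hsq : ∀ i, Real.sqrt (σ i) * Real.sqrt (σ i) = σ i :=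
    fun i => Real.mul_self_sqrt (hσ i).le
  have hne : ∀ i, Real.sqrt (σ i) ≠ 0 :=
    fun i => ne_of_gt (Real.sqrt_pos.2 (hσ i))
  have h1 : Sighalfinv * Matrix.diagonal σ * Sighalfinv = 1 := by
    simp only [Sighalfinv, Matrix.diagonal_mul_diagonal, ← Matrix.diagonal_one]
    refine congrArg Matrix.diagonal (funext fun i => ?_)
    rw [← hsq i]
    field_simp
    rw [Real.sqrt_sq (Real.sqrt_nonneg _)]
    exact div_self (pow_ne_zero 2 (hne i))
  have h2 : Sighalfinv * (Matrix.diagonal σ * Matrix.diagonal σ) * Sighalfinv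
      = Matrix.diagonal σ := by
    simp only [Sighalfinv, Matrix.diagonal_mul_diagonal]
    refine congrArg Matrix.diagonal (funext fun i => ?_)
    rw [← hsq i]
    field_simp
    rw [Real.sqrt_sq (Real.sqrt_nonneg _), div_eq_iff (pow_ne_zero 2 (hne i))]
    ring
  have key1 : Uᵀ * (Lᵀ * K) * V = Matrix.diagonal σ := by
    rw [hLK]
    simp only [Matrix.mul_assoc, hV, Matrix.mul_one]
    rw [← Matrix.mul_assoc, hU, Matrix.one_mul]
  have hST : S * T' = 1 := by
    have : S * T' = Sighalfinv * (Uᵀ * (Lᵀ * K) * V) * Sighalfinv := by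
      simp only [S, T', Matrix.mul_assoc]
    rw [this, key1, h1]
  have hTS : T' * S = 1 := mul_eq_one_comm.mp hST
  have key2 : Uᵀ * ((Lᵀ * K) * ((Kᵀ * L) * U))
      = Matrix.diagonal σ * Matrix.diagonal σ := by
    rw [hLK, hSVD]
    simp only [Matrix.mul_assoc]
    rw [hU, Matrix.mul_one, ← Matrix.mul_assoc Vᵀ, hV, Matrix.one_mul,
      ← Matrix.mul_assoc Uᵀ, hU, Matrix.one_mul]
  have key3 : Vᵀ * ((Kᵀ * L) * ((Lᵀ * K) * V))
      = Matrix.diagonal σ * Matrix.diagonal σ := by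
    rw [hSVD, hLK]
    simp only [Matrix.mul_assoc]
    rw [hV, Matrix.mul_one, ← Matrix.mul_assoc Uᵀ, hU, Matrix.one_mul,
      ← Matrix.mul_assoc Vᵀ, hV, Matrix.one_mul]
  have hSsym : Sᵀ = L * U * Sighalfinv := by
    simp [S, Sighalfinv, Matrix.transpose_mul, Matrix.diagonal_transpose, Matrix.mul_assoc]
  have hSP : S * P * Sᵀ = Matrix.diagonal σ := by
    rw [hSsym, hPK]
    have : Sighalfinv * Uᵀ * Lᵀ * (K * Kᵀ) * (L * U * Sighalfinv)
        = Sighalfinv * (Uᵀ * ((Lᵀ * K) * ((Kᵀ * L) * U))) * Sighalfinv := by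
      simp only [Matrix.mul_assoc]
    rw [show S = Sighalfinv * Uᵀ * Lᵀ from rfl, this, key2, h2]
  have hTQ : T'ᵀ * Q * T' = Matrix.diagonal σ := by
    have hTt : T'ᵀ = Sighalfinv * Vᵀ * Kᵀ := by
      simp [T', Sighalfinv, Matrix.transpose_mul, Matrix.diagonal_transpose, Matrix.mul_assoc]
    rw [hTt, hQL]
    have : Sighalfinv * Vᵀ * Kᵀ * (L * Lᵀ) * (K * V * Sighalfinv)
        = Sighalfinv * (Vᵀ * ((Kᵀ * L) * ((Lᵀ * K) * V))) * Sighalfinv := by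
      simp only [Matrix.mul_assoc]
    rw [show T' = K * V * Sighalfinv from rfl, this, key3, h2]
  exact ⟨hST, hTS, hSP, hTQ⟩
end

section
/- Let 1 ≤ r < n and consider partitioned matrices A_S ∈ ℝ^{n×n}, B_S ∈ ℝ^{n×m}, C_S ∈ ℝ^{p×n}, N_{i,S} ∈ ℝ^{n×n} (i = 1,…,q) with blocks A₁₁, N_{i,11} ∈ ℝ^{r×r}, A₁₂, N_{i,12} ∈ ℝ^{r×(n−r)}, A₂₁, N_{i,21} ∈ ℝ^{(n−r)×r}, A₂₂, N_{i,22} ∈ ℝ^{(n−r)×(n−r)}, B₁ ∈ ℝ^{r×m}, B₂ ∈ ℝ^{(n−r)×m}, C₁ ∈ ℝ^{p×r}, C₂ ∈ ℝ^{p×(n−r)}, and let Σ_T = diag(Σ_{T,1}, Σ_{T,2}) be block diagonal with Σ_{T,1} ∈ ℝ^{r×r}, Σ_{T,2} ∈ ℝ^{(n−r)×(n−r)} symmetric. Let K = (k_{ij}) ∈ ℝ^{q×q} be symmetric. Assume: (i) A_S Σ_T + Σ_T A_Sᵀ + Σ_{i,j} k_{ij} N_{i,S} Σ_T N_{j,S}ᵀ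 = −B_S B_Sᵀ + F_S, where F_S ∈ ℝ^{n×n} has blocks F₁₁, F₁₂, F₂₁, F₂₂; (ii) P̄ ∈ ℝ^{r×r} satisfies A₁₁ P̄ + P̄ A₁₁ᵀ + Σ_{i,j} k_{ij} N_{i,11} P̄ N_{j,11}ᵀ = −B₁ B₁ᵀ + F̄ for some F̄ ∈ ℝ^{r×r}; (iii) Ỹ ∈ ℝ^{n×r} satisfies A_S Ỹ + Ỹ A₁₁ᵀ + Σ_{i,j} k_{ij} N_{i,S} Ỹ N_{j,11}ᵀ = −B_S B₁ᵀ + F̃_S, where F̃_S has row blocks F̃₁ ∈ ℝ^{r×r}, F̃₂ ∈ ℝ^{(n−r)×r}; (iv) Q̄ ∈ ℝ^{r×r} satisfies A₁₁ᵀ Q̄ + Q̄ A₁₁ + Σ_{i,j} k_{ij} N_{i,11}ᵀ Q̄ N_{j,11} = −C₁ᵀ C₁; (v) Q̃ ∈ ℝ^{r×n} satisfies A₁₁ᵀ Q̃ + Q̃ A_S + Σ_{i,j} k_{ij} N_{i,11}ᵀ Q̃ N_{j,S} = −C₁ᵀ C_S, with column blocks Q̃₁ ∈ ℝ^{r×r},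 Q̃₂ ∈ ℝ^{r×(n−r)}. Then tr(C_S Σ_T C_Sᵀ) + tr(C₁ P̄ C₁ᵀ) − 2 tr(C_S Ỹ C₁ᵀ) = tr( Σ_{T,2} [ C₂ᵀ C₂ + 2 A₁₂ᵀ Q̃₂ + Σ_{i,j=1}^q k_{ij} N_{i,12}ᵀ ( 2 Q̃ [N_{j,12}; N_{j,22}] − Q̄ N_{j,12} ) ] ) + 2 tr( Q̃ [F̃₁ − F₁₁; F̃₂ − F₂₁] ) + tr( Q̄ (F₁₁ − F̄) ). -/
open Matrix

set_option maxHeartbeats 1000000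
set_option linter.unusedVariables false
set_option linter.unusedSectionVars false

section Helpers
variable {R : Type*} [CommRing R] {l m n o : Type*} [Fintype l] [Fintype m] [Fintype n] [Fintype o]

lemma my_trace_fromBlocks (A : Matrix n n R) (B : Matrix n o R) (C : Matrix o n R) (D : Matrix o o R) :
    trace (fromBlocks A B C D) = trace A + trace D := by
  simp [Matrix.trace, Matrix.diag, Fintype.sum_sum_type]

lemma my_fromBlocks_sum {ι : Type*} (s : Finset ι) (A : ι → Matrix n l R) (B : ι → Matrix n m R)
    (C : ι → Matrix o l R) (D : ι → Matrix o m R) :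
    ∑ i ∈ s, fromBlocks (A i) (B i) (C i) (D i) =
      fromBlocks (∑ i ∈ s, A i) (∑ i ∈ s, B i) (∑ i ∈ s, C i) (∑ i ∈ s, D i) := by
  ext (i | i) (j | j) <;> simp [Matrix.sum_apply]

lemma my_fromRows_sum {ι : Type*} (s : Finset ι) (A : ι → Matrix n l R) (B : ι → Matrix m l R) :
    ∑ i ∈ s, fromRows (A i) (B i) = fromRows (∑ i ∈ s, A i) (∑ i ∈ s, B i) := by
  ext (i | i) j <;> simp [Matrix.sum_apply]

lemma my_fromColumns_sum {ι : Type*} (s : Finset ι) (A : ι → Matrix l n R) (B : ι → Matrix l m R) :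
    ∑ i ∈ s, fromCols (A i) (B i) = fromCols (∑ i ∈ s, A i) (∑ i ∈ s, B i) := by
  ext i (j | j) <;> simp [Matrix.sum_apply]

lemma my_fromRows_add (A A' : Matrix n l R) (B B' : Matrix m l R) :
    fromRows A B + fromRows A' B' = fromRows (A + A') (B + B') := by
  ext (i | i) j <;> simp

lemma my_fromColumns_add (A A' : Matrix l n R) (B B' : Matrix l m R) :
    fromCols A B + fromCols A' B' = fromCols (A + A') (B + B') := by
  ext i (j | j) <;> simp

lemma my_fromRows_smul (c : R) (A : Matrix n l R) (B : Matrix m l R) :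
    c • fromRows A B = fromRows (c • A) (c • B) := by
  ext (i | i) j <;> simp

lemma my_fromColumns_smul (c : R) (A : Matrix l n R) (B : Matrix l m R) :
    c • fromCols A B = fromCols (c • A) (c • B) := by
  ext i (j | j) <;> simp

lemma my_fromRows_neg (A : Matrix n l R) (B : Matrix m l R) :
    -fromRows A B = fromRows (-A) (-B) := by
  ext (i | i) j <;> simp

lemma Ksum_swap {q : ℕ} (K : Matrix (Fin q) (Fin q) R) (hK : K.IsSymm)
    (f g : Fin q → Fin q → R) (h : ∀ i j, f i j = g j i) :
    ∑ i, ∑ j, K i j * f i j = ∑ i, ∑ j, K i j * g i j := by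
  rw [Finset.sum_comm]
  refine Finset.sum_congr rfl fun j _ => Finset.sum_congr rfl fun i _ => ?_
  rw [hK.apply i j, h i j]

lemma trace_rot3 {a b c : Type*} [Fintype a] [Fintype b] [Fintype c]
    (A : Matrix a b R) (B : Matrix b c R) (C : Matrix c a R) :
    (A * (B * C)).trace = (C * (A * B)).trace := by
  rw [← Matrix.mul_assoc, trace_mul_comm]

lemma trace_rot4 {a b c d : Type*} [Fintype a] [Fintype b] [Fintype c] [Fintype d]
    (A : Matrix a b R) (B : Matrix b c R) (C : Matrix c d R) (D : Matrix d a R) :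
    (A * (B * (C * D))).trace = (D * (A * (B * C))).trace := by
  rw [← Matrix.mul_assoc, ← Matrix.mul_assoc, trace_mul_comm, Matrix.mul_assoc]


end Helpers

/-- **Theorem 3.1 (algebraic content).** With the partitioned balanced realization
`(A_S, B_S, C_S, N_{i,S})`, the balanced Gramian `Σ_T = diag(Σ_{T,1}, Σ_{T,2})` and the
solutions `P̄, Ỹ, Q̄, Q̃` of the auxiliary generalized Lyapunov/Sylvester equations,
the squared error-bound constant
`ε² = tr(C_S Σ_T C_Sᵀ) + tr(C₁ P̄ C₁ᵀ) − 2 tr(C_S Ỹ C₁ᵀ)` equals the stated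
expression in the truncated block `Σ_{T,2}` and the covariance-error terms. -/
theorem error_bound_trace_identity {r s m p q : ℕ} (hr : 0 < r) (hs : 0 < s)
    (A11 : Matrix (Fin r) (Fin r) ℝ) (A12 : Matrix (Fin r) (Fin s) ℝ)
    (A21 : Matrix (Fin s) (Fin r) ℝ) (A22 : Matrix (Fin s) (Fin s) ℝ)
    (N11 : Fin q → Matrix (Fin r) (Fin r) ℝ) (N12 : Fin q → Matrix (Fin r) (Fin s) ℝ)
    (N21 : Fin q → Matrix (Fin s) (Fin r) ℝ) (N22 : Fin q → Matrix (Fin s) (Fin s) ℝ)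
    (B1 : Matrix (Fin r) (Fin m) ℝ) (B2 : Matrix (Fin s) (Fin m) ℝ)
    (C1 : Matrix (Fin p) (Fin r) ℝ) (C2 : Matrix (Fin p) (Fin s) ℝ)
    (Sig1 : Matrix (Fin r) (Fin r) ℝ) (Sig2 : Matrix (Fin s) (Fin s) ℝ)
    (hSig1 : Sig1.IsSymm) (hSig2 : Sig2.IsSymm)
    (K : Matrix (Fin q) (Fin q) ℝ) (hK : K.IsSymm)
    (F11 : Matrix (Fin r) (Fin r) ℝ) (F12 : Matrix (Fin r) (Fin s) ℝ)
    (F21 : Matrix (Fin s) (Fin r) ℝ) (F22 : Matrix (Fin s) (Fin s) ℝ)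
    (Pbar Fbar : Matrix (Fin r) (Fin r) ℝ)
    (Ytil : Matrix (Fin r ⊕ Fin s) (Fin r) ℝ)
    (Ftil1 : Matrix (Fin r) (Fin r) ℝ) (Ftil2 : Matrix (Fin s) (Fin r) ℝ)
    (Qbar : Matrix (Fin r) (Fin r) ℝ)
    (Qtil1 : Matrix (Fin r) (Fin r) ℝ) (Qtil2 : Matrix (Fin r) (Fin s) ℝ)
    -- (i) the balanced Gramian equation
    (hi :
      (fromBlocks A11 A12 A21 A22) * (fromBlocks Sig1 0 0 Sig2) +
        (fromBlocks Sig1 0 0 Sig2) * (fromBlocks A11 A12 A21 A22)ᵀ +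
        ∑ i, ∑ j, K i j •
          ((fromBlocks (N11 i) (N12 i) (N21 i) (N22 i)) * (fromBlocks Sig1 0 0 Sig2) *
            (fromBlocks (N11 j) (N12 j) (N21 j) (N22 j))ᵀ) =
      -((fromRows B1 B2) * (fromRows B1 B2)ᵀ) + fromBlocks F11 F12 F21 F22)
    -- (ii) the reduced-order Gramian equation
    (hii :
      A11 * Pbar + Pbar * A11ᵀ + ∑ i, ∑ j, K i j • (N11 i * Pbar * (N11 j)ᵀ) =
        -(B1 * B1ᵀ) + Fbar)
    -- (iii) the mixed (cross) Gramian equation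
    (hiii :
      (fromBlocks A11 A12 A21 A22) * Ytil + Ytil * A11ᵀ +
        ∑ i, ∑ j, K i j •
          ((fromBlocks (N11 i) (N12 i) (N21 i) (N22 i)) * Ytil * (N11 j)ᵀ) =
      -((fromRows B1 B2) * B1ᵀ) + fromRows Ftil1 Ftil2)
    -- (iv) the reduced observability-type equation
    (hiv :
      A11ᵀ * Qbar + Qbar * A11 + ∑ i, ∑ j, K i j • ((N11 i)ᵀ * Qbar * N11 j) =
        -(C1ᵀ * C1))
    -- (v) the mixed observability-type equation
    (hv :
      A11ᵀ * (fromCols Qtil1 Qtil2) +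
        (fromCols Qtil1 Qtil2) * (fromBlocks A11 A12 A21 A22) +
        ∑ i, ∑ j, K i j •
          ((N11 i)ᵀ * (fromCols Qtil1 Qtil2) *
            (fromBlocks (N11 j) (N12 j) (N21 j) (N22 j))) =
      -(C1ᵀ * (fromCols C1 C2))) :
    Matrix.trace ((fromCols C1 C2) * (fromBlocks Sig1 0 0 Sig2) * (fromCols C1 C2)ᵀ) +
      Matrix.trace (C1 * Pbar * C1ᵀ) -
      2 * Matrix.trace ((fromCols C1 C2) * Ytil * C1ᵀ) =
    Matrix.trace (Sig2 *
      (C2ᵀ * C2 + (2:ℝ) • (A12ᵀ * Qtil2) +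
        ∑ i, ∑ j, K i j •
          ((N12 i)ᵀ *
            ((2:ℝ) • ((fromCols Qtil1 Qtil2) * fromRows (N12 j) (N22 j)) -
              Qbar * N12 j)))) +
    2 * Matrix.trace ((fromCols Qtil1 Qtil2) * fromRows (Ftil1 - F11) (Ftil2 - F21)) +
    Matrix.trace (Qbar * (F11 - Fbar)) := by
  obtain ⟨hi11, hi12, hi21, hi22⟩ := fromBlocks_inj.mp (by
    simpa only [fromBlocks_multiply, fromBlocks_transpose, transpose_fromRows,
      fromRows_mul_fromCols, fromBlocks_smul, my_fromBlocks_sum, fromBlocks_add,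
      Matrix.fromBlocks_neg, Matrix.mul_zero, Matrix.zero_mul, add_zero, zero_add] using hi)

  set Y1 := Ytil.toRows₁ with hY1
  set Y2 := Ytil.toRows₂ with hY2
  rw [← fromRows_toRows Ytil, ← hY1, ← hY2] at hiii ⊢
  obtain ⟨h3a, h3b⟩ := fromRows_inj (by
    simpa only [fromBlocks_mul_fromRows, fromRows_mul, my_fromRows_smul, my_fromRows_sum,
      my_fromRows_add, my_fromRows_neg] using hiii)
  obtain ⟨h5a, h5b⟩ := fromCols_inj (by
    simpa only [mul_fromCols, fromCols_mul_fromBlocks, my_fromColumns_smul,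
      my_fromColumns_sum, my_fromColumns_add, fromCols_neg] using hv)

  -- scalar trace equations
  have E2 := congrArg (fun X => trace (Qbar * X)) hii
  have E4P := congrArg (fun X => trace (X * Pbar)) hiv
  have E4S := congrArg (fun X => trace (X * Sig1)) hiv
  have E1a := congrArg (fun X => trace (Qbar * X)) hi11
  have E1b := congrArg (fun X => trace (Qtil1 * X)) hi11
  have E1c := congrArg (fun X => trace (Qtil2 * X)) hi21
  have E3a := congrArg (fun X => trace (Qtil1 * X)) h3a
  have E3b := congrArg (fun X => trace (Qtil2 * X)) h3b
  have E5aS := congrArg (fun X => trace (X * Sig1)) h5a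
  have E5aY := congrArg (fun X => trace (X * Y1)) h5a
  have E5bY := congrArg (fun X => trace (X * Y2)) h5b
  simp only [Matrix.mul_add, Matrix.add_mul, Matrix.mul_sum, Matrix.sum_mul, Matrix.mul_smul,
    Matrix.smul_mul, Matrix.mul_neg, Matrix.neg_mul, Matrix.mul_sub, Matrix.sub_mul,
    trace_add, trace_neg, trace_sub, trace_smul, trace_sum, smul_eq_mul, Matrix.mul_assoc,
    Finset.sum_add_distrib, Finset.sum_sub_distrib] at E2 E4P E4S E1a E1b E1c E3a E3b E5aS E5aY E5bY
  simp only [fromCols_mul_fromBlocks, transpose_fromCols, fromCols_mul_fromRows,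
    Matrix.mul_zero, Matrix.zero_mul, add_zero, zero_add,
    Matrix.mul_add, Matrix.add_mul, Matrix.mul_sum, Matrix.mul_smul, Matrix.mul_sub,
    trace_add, trace_sub, trace_smul, trace_sum, smul_eq_mul, Matrix.mul_assoc,
    Finset.sum_add_distrib, Finset.sum_sub_distrib]
  -- split paired sums
  simp_rw [mul_add, Finset.sum_add_distrib] at E1a E1b E1c E3a E3b E5aS E5aY E5bY
  -- normalize the goal's double sum
  simp_rw [mul_sub, mul_add, show ∀ a b : ℝ, a * (2 * b) = 2 * (a * b) from fun a b => by ring,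
    Finset.sum_sub_distrib, Finset.sum_add_distrib, ← Finset.mul_sum]
  -- sum bridges
  have s1 : (∑ x : Fin q, ∑ y : Fin q, K x y * ((N11 x)ᵀ * (Qbar * (N11 y * Pbar))).trace)
      = ∑ x : Fin q, ∑ y : Fin q, K x y * (Qbar * (N11 x * (Pbar * (N11 y)ᵀ))).trace :=
    Ksum_swap K hK _ _ (fun i j => (trace_rot4 Qbar (N11 j) Pbar ((N11 i)ᵀ)).symm)
  have s2 : (∑ x : Fin q, ∑ y : Fin q, K x y * ((N11 x)ᵀ * (Qbar * (N11 y * Sig1))).trace)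
      = ∑ x : Fin q, ∑ y : Fin q, K x y * (Qbar * (N11 x * (Sig1 * (N11 y)ᵀ))).trace :=
    Ksum_swap K hK _ _ (fun i j => (trace_rot4 Qbar (N11 j) Sig1 ((N11 i)ᵀ)).symm)
  have s3 : (∑ x : Fin q, ∑ y : Fin q, K x y * ((N11 x)ᵀ * (Qtil1 * (N11 y * Sig1))).trace)
      = ∑ x : Fin q, ∑ y : Fin q, K x y * (Qtil1 * (N11 x * (Sig1 * (N11 y)ᵀ))).trace :=
    Ksum_swap K hK _ _ (fun i j => (trace_rot4 Qtil1 (N11 j) Sig1 ((N11 i)ᵀ)).symm)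
  have s4 : (∑ x : Fin q, ∑ y : Fin q, K x y * ((N11 x)ᵀ * (Qtil2 * (N21 y * Sig1))).trace)
      = ∑ x : Fin q, ∑ y : Fin q, K x y * (Qtil2 * (N21 x * (Sig1 * (N11 y)ᵀ))).trace :=
    Ksum_swap K hK _ _ (fun i j => (trace_rot4 Qtil2 (N21 j) Sig1 ((N11 i)ᵀ)).symm)
  have s5 : (∑ x : Fin q, ∑ y : Fin q, K x y * ((N11 x)ᵀ * (Qtil1 * (N11 y * Y1))).trace)
      = ∑ x : Fin q, ∑ y : Fin q, K x y * (Qtil1 * (N11 x * (Y1 * (N11 y)ᵀ))).trace :=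
    Ksum_swap K hK _ _ (fun i j => (trace_rot4 Qtil1 (N11 j) Y1 ((N11 i)ᵀ)).symm)
  have s6 : (∑ x : Fin q, ∑ y : Fin q, K x y * ((N11 x)ᵀ * (Qtil2 * (N21 y * Y1))).trace)
      = ∑ x : Fin q, ∑ y : Fin q, K x y * (Qtil2 * (N21 x * (Y1 * (N11 y)ᵀ))).trace :=
    Ksum_swap K hK _ _ (fun i j => (trace_rot4 Qtil2 (N21 j) Y1 ((N11 i)ᵀ)).symm)
  have s7 : (∑ x : Fin q, ∑ y : Fin q, K x y * ((N11 x)ᵀ * (Qtil1 * (N12 y * Y2))).trace)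
      = ∑ x : Fin q, ∑ y : Fin q, K x y * (Qtil1 * (N12 x * (Y2 * (N11 y)ᵀ))).trace :=
    Ksum_swap K hK _ _ (fun i j => (trace_rot4 Qtil1 (N12 j) Y2 ((N11 i)ᵀ)).symm)
  have s8 : (∑ x : Fin q, ∑ y : Fin q, K x y * ((N11 x)ᵀ * (Qtil2 * (N22 y * Y2))).trace)
      = ∑ x : Fin q, ∑ y : Fin q, K x y * (Qtil2 * (N22 x * (Y2 * (N11 y)ᵀ))).trace :=
    Ksum_swap K hK _ _ (fun i j => (trace_rot4 Qtil2 (N22 j) Y2 ((N11 i)ᵀ)).symm)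
  have s9 : (∑ x : Fin q, ∑ y : Fin q, K x y * (Sig2 * ((N12 x)ᵀ * (Qtil1 * N12 y))).trace)
      = ∑ x : Fin q, ∑ y : Fin q, K x y * (Qtil1 * (N12 x * (Sig2 * (N12 y)ᵀ))).trace :=
    Ksum_swap K hK _ _ (fun i j =>
      ((trace_rot4 Qtil1 (N12 j) Sig2 ((N12 i)ᵀ)).trans
        (trace_rot4 ((N12 i)ᵀ) Qtil1 (N12 j) Sig2)).symm)
  have s10 : (∑ x : Fin q, ∑ y : Fin q, K x y * (Sig2 * ((N12 x)ᵀ * (Qtil2 * N22 y))).trace)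
      = ∑ x : Fin q, ∑ y : Fin q, K x y * (Qtil2 * (N22 x * (Sig2 * (N12 y)ᵀ))).trace :=
    Ksum_swap K hK _ _ (fun i j =>
      ((trace_rot4 Qtil2 (N22 j) Sig2 ((N12 i)ᵀ)).trans
        (trace_rot4 ((N12 i)ᵀ) Qtil2 (N22 j) Sig2)).symm)
  have s11 : (∑ x : Fin q, ∑ y : Fin q, K x y * (Sig2 * ((N12 x)ᵀ * (Qbar * N12 y))).trace)
      = ∑ x : Fin q, ∑ y : Fin q, K x y * (Qbar * (N12 x * (Sig2 * (N12 y)ᵀ))).trace :=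
    Ksum_swap K hK _ _ (fun i j =>
      ((trace_rot4 Qbar (N12 j) Sig2 ((N12 i)ᵀ)).trans
        (trace_rot4 ((N12 i)ᵀ) Qbar (N12 j) Sig2)).symm)
  rw [s1] at E4P
  rw [s2] at E4S
  rw [s3, s4] at E5aS
  rw [s5, s6] at E5aY
  rw [s7, s8] at E5bY
  rw [s9, s10, s11]
  -- rot3 bridges for the single trace atoms
  rw [← trace_rot3 Qbar Pbar A11ᵀ, ← trace_rot3 C1 Pbar C1ᵀ] at E4P
  rw [← trace_rot3 Qbar Sig1 A11ᵀ, ← trace_rot3 C1 Sig1 C1ᵀ] at E4S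
  rw [← trace_rot3 Qtil1 Sig1 A11ᵀ, ← trace_rot3 C1 Sig1 C1ᵀ] at E5aS
  rw [← trace_rot3 Qtil1 Y1 A11ᵀ, ← trace_rot3 C1 Y1 C1ᵀ] at E5aY
  rw [← trace_rot3 Qtil2 Y2 A11ᵀ, ← trace_rot3 C2 Y2 C1ᵀ] at E5bY
  rw [show (Qtil2 * (Sig2 * A12ᵀ)).trace = (Sig2 * (A12ᵀ * Qtil2)).trace from
    (trace_rot3 Qtil2 Sig2 A12ᵀ).trans (trace_rot3 A12ᵀ Qtil2 Sig2)] at E1c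
  rw [show (C2 * (Sig2 * C2ᵀ)).trace = (Sig2 * (C2ᵀ * C2)).trace from
    (trace_rot3 C2 Sig2 C2ᵀ).trans (trace_rot3 C2ᵀ C2 Sig2)]
  linarith [E2, E4P, E4S, E1a, E1b, E1c, E3a, E3b, E5aS, E5aY, E5bY]
end
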